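/- Let G be a finite directed graph with entry ⊤ and exit ⊥, and let H be the node-induced subgraph on a subset R containing ⊤ and ⊥, with an edge (u,v) in H iff there is a path in G from u to v whose interior nodes avoid R. Then the event traces (subsequences in R) of ⊤-to-⊥ paths in G are exactly the node sequences of ⊤-to-⊥ paths in H. -/

import Mathlib

/-- `l` is a walk from `a` to `b` in the directed graph with edge relation `E`. -/
def IsWalkFromTo {V : Type*} (E : V → V → Prop) (a b : V) (l : List V) : Prop :=
  l ≠ [] ∧ l.head? = some a ∧ l.getLast? = some b ∧ l.Chain' E

theorem filter_getLast_aux {V : Type*} {P : V → Bool} {l : List V} {b : V}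
    (h : l.getLast? = some b) (hb : P b = true) :
    (l.filter P).getLast? = some b := by
  have h' : l.reverse.head? = some b := by rw [List.head?_reverse]; exact h
  obtain ⟨t, ht⟩ : ∃ t, l.reverse = b :: t := by
    cases hr : l.reverse with
    | nil => rw [hr] at h'; simp at h'
    | cons x t => rw [hr] at h'; simp at h'; exact ⟨t, by rw [h']⟩
  rw [← List.head?_reverse, ← List.filter_reverse, ht, List.filter_cons_of_pos hb]
  rfl

theorem fwd_aux {V : Type*} (E : V → V → Prop) (R : Set V) [DecidablePred (· ∈ R)] :
    ∀ (l : List V) (a : V) (w : List V), a ∈ R → (∀ x ∈ w, x ∉ R) →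
      List.Chain E a (w ++ l) →
      List.Chain' (fun u v => u ∈ R ∧ v ∈ R ∧
        ∃ w : List V, List.Chain E u (w ++ [v]) ∧ ∀ x ∈ w, x ∉ R)
        (a :: l.filter (fun v => decide (v ∈ R)))
  | [], a, w, ha, hw, hch => by simp [List.Chain']
  | b :: t, a, w, ha, hw, hch => by
    by_cases hb : b ∈ R
    · replace hch := List.isChain_cons_split.mp hch
      rw [List.filter_cons_of_pos (by simpa using hb)]
      have ih := fwd_aux E R t b [] hb (by simp) hch.2
      exact List.isChain_cons_cons.mpr ⟨⟨ha, hb, w, hch.1, hw⟩, ih⟩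
    · rw [List.filter_cons_of_neg (by simpa using hb)]
      refine fwd_aux E R t a (w ++ [b]) ha ?_ ?_
      · intro x hx
        rcases List.mem_append.1 hx with h | h
        · exact hw x h
        · simp at h; subst h; exact hb
      · rw [List.append_assoc, List.singleton_append]; exact hch

theorem bwd_aux {V : Type*} (E : V → V → Prop) (R : Set V) [DecidablePred (· ∈ R)] :
    ∀ (l : List V) (a : V), a ∈ R →
      List.Chain' (fun u v => u ∈ R ∧ v ∈ R ∧
        ∃ w : List V, List.Chain E u (w ++ [v]) ∧ ∀ x ∈ w, x ∉ R) (a :: l) →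
      ∃ m : List V, m ≠ [] ∧ m.head? = some a ∧ m.getLast? = (a :: l).getLast? ∧
        m.Chain' E ∧ m.filter (fun v => decide (v ∈ R)) = a :: l
  | [], a, ha, _ => ⟨[a], by simp [ha, List.Chain']⟩
  | b :: t, a, ha, hch => by
    replace hch := List.isChain_cons_cons.mp hch
    obtain ⟨⟨_, hb, w, hcw, hwR⟩, hch'⟩ := hch
    obtain ⟨m, hmne, hmh, hml, hmc, hmf⟩ := bwd_aux E R t b hb hch'
    obtain ⟨m', rfl⟩ : ∃ m'', m = b :: m'' := by
      cases m with
      | nil => simp at hmh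
      | cons x m'' => simp at hmh; exact ⟨m'', by rw [hmh]⟩
    refine ⟨a :: w ++ b :: m', by simp, by simp, ?_, ?_, ?_⟩
    · obtain ⟨y, hy⟩ : ∃ y, (b :: m').getLast? = some y :=
        Option.isSome_iff_exists.1 (List.getLast?_isSome.2 (by simp))
      rw [show (a :: w ++ b :: m') = (a :: w) ++ (b :: m') by simp,
        List.getLast?_append, hy, List.getLast?_cons_cons, ← hml, hy]
      simp
    · show List.Chain E a (w ++ b :: m')
      exact List.isChain_cons_split.mpr ⟨hcw, hmc⟩
    · have hwf : w.filter (fun v => decide (v ∈ R)) = [] := by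
        rw [List.filter_eq_nil_iff]
        intro x hx
        simpa using hwR x hx
      rw [show (a :: w ++ b :: m') = a :: (w ++ b :: m') by simp,
        List.filter_cons_of_pos (by simpa using ha), List.filter_append, hwf, hmf]
      rfl

/-- The event traces of `⊤`-to-`⊥` walks in `G` are exactly the node sequences of
`⊤`-to-`⊥` walks in the induced graph `H` on `R`, where `H` has an edge `(u,v)` iff
`G` has a nontrivial path from `u` to `v` whose intermediate nodes avoid `R`. -/
theorem stmt9 {V : Type*} [Fintype V] [DecidableEq V] (E : V → V → Prop)
    (R : Set V) [DecidablePred (· ∈ R)] (top bot : V)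
    (htop : top ∈ R) (hbot : bot ∈ R)
    (hcover : ∀ v, Relation.ReflTransGen E top v ∧ Relation.ReflTransGen E v bot) :
    {t | ∃ l, IsWalkFromTo E top bot l ∧ l.filter (fun v => decide (v ∈ R)) = t} =
    {l | IsWalkFromTo (fun u v => u ∈ R ∧ v ∈ R ∧
        ∃ w : List V, List.Chain E u (w ++ [v]) ∧ ∀ x ∈ w, x ∉ R) top bot l} := by
  ext t
  simp only [Set.mem_setOf_eq]
  constructor
  · rintro ⟨l, ⟨hne, hhd, hlast, hch⟩, rfl⟩
    obtain ⟨t', rfl⟩ : ∃ t', l = top :: t' := by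
      cases l with
      | nil => simp at hhd
      | cons x t' => simp at hhd; exact ⟨t', by rw [hhd]⟩
    rw [List.filter_cons_of_pos (by simpa using htop)]
    refine ⟨by simp, by simp, ?_, ?_⟩
    · have := filter_getLast_aux (P := fun v => decide (v ∈ R)) hlast (by simpa using hbot)
      rw [List.filter_cons_of_pos (by simpa using htop)] at this
      exact this
    · exact fwd_aux E R t' top [] htop (by simp) hch
  · rintro ⟨hne, hhd, hlast, hch⟩
    obtain ⟨t', rfl⟩ : ∃ t', t = top :: t' := by
      cases t with
      | nil => simp at hhd
      | cons x t' => simp at hhd; exact ⟨t', by rw [hhd]⟩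
    obtain ⟨m, hmne, hmh, hml, hmc, hmf⟩ := bwd_aux E R t' top htop hch
    exact ⟨m, ⟨hmne, hmh, by rw [hml]; exact hlast, hmc⟩, hmf⟩
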